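/- arXiv:2509.07657 — 2 statements merged into one kernel-verified Lean document; each statement's English description precedes it below -/
import Mathlib

section
/- Let r ≥ 1 and C > 0. There exists a constant C' > 0, depending only on C, such that for every integer n ≥ 2, every probability space (Ω, μ), and every finite collection Z₁,…,Z_n of nonnegative random variables on Ω satisfying ‖max_{1≤k≤n} Z_k‖_{L^r} ≤ C n^{−1/2}, one has ‖max_{1≤k≤n} ω₁(Z_k)‖_{L^r} ≤ C' n^{−1/2} log n. -/
open MeasureTheory

/-- `ℓ(t) = -log t` for `0 < t ≤ 1/3` and `ℓ(t) = log 3` for `t ≥ 1/3`. -/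
noncomputable def ell (t : ℝ) : ℝ := if t ≤ 1/3 then -Real.log t else Real.log 3

/-- `ω_q(t) = (t ℓ(t))^q` for `t > 0` and `ω_q(0) = 0`. -/
noncomputable def omegaQ (q t : ℝ) : ℝ := if t = 0 then 0 else (t * ell t) ^ q

lemma omegaQ_one_eq (t : ℝ) : omegaQ 1 t = t * ell t := by
  unfold omegaQ; split
  · simp [*, ell]
  · exact Real.rpow_one _

lemma ell_measurable : Measurable ell := by
  unfold ell
  exact Measurable.ite (measurableSet_le measurable_id measurable_const)
    Real.measurable_log.neg measurable_const

lemma omegaQ_one_measurable : Measurable (omegaQ 1) := by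
  have : omegaQ 1 = fun t => t * ell t := funext omegaQ_one_eq
  rw [this]
  exact measurable_id.mul ell_measurable

lemma ell_nonneg {t : ℝ} (ht : 0 ≤ t) : 0 ≤ ell t := by
  unfold ell; split
  case isTrue h =>
    simp only [neg_nonneg]; exact Real.log_nonpos ht (by linarith)
  case isFalse h => exact Real.log_nonneg (by norm_num)

lemma omegaQ_one_nonneg {t : ℝ} (ht : 0 ≤ t) : 0 ≤ omegaQ 1 t := by
  rw [omegaQ_one_eq]; exact mul_nonneg ht (ell_nonneg ht)

lemma ell_le {t : ℝ} : ell t ≤ Real.log 3 + max 0 (-Real.log t) := by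
  unfold ell; split
  · have h1 : (0:ℝ) ≤ Real.log 3 := Real.log_nonneg (by norm_num)
    have h2 : -Real.log t ≤ max 0 (-Real.log t) := le_max_right _ _
    linarith
  · have : (0:ℝ) ≤ max 0 (-Real.log t) := le_max_left _ _
    linarith

lemma le_omega_aux {t : ℝ} (ht : 0 ≤ t) : t ≤ 1/3 + omegaQ 1 t / Real.log 3 := by
  rw [omegaQ_one_eq]
  have h3 : (0:ℝ) < Real.log 3 := Real.log_pos (by norm_num)
  by_cases h : t ≤ 1/3
  · have : 0 ≤ (t * ell t) / Real.log 3 := div_nonneg (mul_nonneg ht (ell_nonneg ht)) h3.le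
    linarith
  · have : ell t = Real.log 3 := by unfold ell; rw [if_neg h]
    rw [this, mul_div_assoc, div_self h3.ne']
    linarith

lemma bdd_aux (s : Finset ℕ) (f : ℕ → ℝ) :
    BddAbove (Set.range fun k => ⨆ _ : k ∈ s, f k) := by
  apply Set.Finite.bddAbove
  apply Set.Finite.subset (Set.Finite.insert 0 (s.finite_toSet.image f))
  rintro x ⟨k, rfl⟩
  by_cases h : k ∈ s
  · exact Set.mem_insert_of_mem _ ⟨k, h, (ciSup_pos (f := fun _ => f k) h).symm⟩
  · have : (⨆ _ : k ∈ s, f k) = 0 := by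
      have : IsEmpty (k ∈ s) := ⟨h⟩
      exact Real.iSup_of_isEmpty _
    show (⨆ _ : k ∈ s, f k) ∈ _
    rw [this]; exact Set.mem_insert _ _

lemma le_biSup' (f : ℕ → ℝ) {s : Finset ℕ} {k : ℕ} (hk : k ∈ s) :
    f k ≤ ⨆ j ∈ s, f j := by
  have h := le_ciSup (bdd_aux s f) k
  rwa [ciSup_pos (f := fun _ => f k) hk] at h

lemma biSup_le' {f : ℕ → ℝ} {s : Finset ℕ} {a : ℝ} (ha : 0 ≤ a)
    (h : ∀ k ∈ s, f k ≤ a) : (⨆ k ∈ s, f k) ≤ a := by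
  apply ciSup_le
  intro k
  by_cases hk : k ∈ s
  · rw [ciSup_pos (f := fun _ => f k) hk]; exact h k hk
  · have : IsEmpty (k ∈ s) := ⟨hk⟩
    rw [Real.iSup_of_isEmpty]; exact ha

lemma rpow_add_le' {x y p : ℝ} (hx : 0 ≤ x) (hy : 0 ≤ y) (hp : 0 ≤ p) (hp1 : p ≤ 1) :
    (x + y) ^ p ≤ x ^ p + y ^ p := by
  have h := NNReal.rpow_add_le_add_rpow x.toNNReal y.toNNReal hp hp1
  have hc : ((x.toNNReal + y.toNNReal : NNReal) : ℝ) = x + y := by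
    push_cast; rw [Real.coe_toNNReal x hx, Real.coe_toNNReal y hy]
  calc (x + y) ^ p = (((x.toNNReal + y.toNNReal : NNReal) : ℝ)) ^ p := by rw [hc]
    _ = (((x.toNNReal + y.toNNReal) ^ p : NNReal) : ℝ) := by rw [NNReal.coe_rpow]
    _ ≤ ((x.toNNReal ^ p + y.toNNReal ^ p : NNReal) : ℝ) := by exact_mod_cast h
    _ = x ^ p + y ^ p := by
        push_cast
        rw [Real.coe_toNNReal x hx, Real.coe_toNNReal y hy]

lemma add_rpow_le' {x y p : ℝ} (hx : 0 ≤ x) (hy : 0 ≤ y) (hp : 0 ≤ p) :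
    (x + y) ^ p ≤ 2 ^ p * (x ^ p + y ^ p) := by
  have h1 : x + y ≤ 2 * max x y := by
    rcases max_cases x y with ⟨h, h'⟩ | ⟨h, h'⟩ <;> rw [h] <;> linarith
  have h2 : (x + y) ^ p ≤ (2 * max x y) ^ p :=
    Real.rpow_le_rpow (by linarith) h1 hp
  have h3 : (2 * max x y) ^ p = 2 ^ p * (max x y) ^ p :=
    Real.mul_rpow (by norm_num) (le_max_of_le_left hx)
  have h4 : (max x y) ^ p ≤ x ^ p + y ^ p := by
    rcases max_cases x y with ⟨h, _⟩ | ⟨h, _⟩ <;> rw [h]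
    · nlinarith [Real.rpow_nonneg hy p, Real.rpow_nonneg hx p]
    · nlinarith [Real.rpow_nonneg hy p, Real.rpow_nonneg hx p]
  calc (x+y)^p ≤ 2^p * (max x y)^p := h3 ▸ h2
    _ ≤ 2^p * (x^p + y^p) := by
        have : (0:ℝ) ≤ 2^p := Real.rpow_nonneg (by norm_num) p
        nlinarith

lemma nu_eq {n : ℕ} (hn : 2 ≤ n) : (n:ℝ) ^ (-(1:ℝ)/2) = (Real.sqrt n)⁻¹ := by
  rw [neg_div, Real.rpow_neg (by positivity), Real.sqrt_eq_rpow]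

lemma nu_pos {n : ℕ} (hn : 2 ≤ n) : 0 < (n:ℝ) ^ (-(1:ℝ)/2) := by
  have : (0:ℝ) < n := by positivity
  positivity

lemma nu_le_one {n : ℕ} (hn : 2 ≤ n) : (n:ℝ) ^ (-(1:ℝ)/2) ≤ 1 := by
  apply Real.rpow_le_one_of_one_le_of_nonpos
  · exact_mod_cast Nat.one_le_cast.mpr (by omega)
  · norm_num

lemma key_bound {n : ℕ} (hn : 2 ≤ n) {t : ℝ} (ht : 0 ≤ t) :
    omegaQ 1 t ≤ (Real.log 3 + Real.log n + 1) * t + (n:ℝ) ^ (-(1:ℝ)/2) := by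
  set ν := (n:ℝ) ^ (-(1:ℝ)/2) with hν
  have hνpos := nu_pos hn
  have hν1 := nu_le_one hn
  have hlog3 : (0:ℝ) ≤ Real.log 3 := Real.log_nonneg (by norm_num)
  have hlogn : (0:ℝ) ≤ Real.log n :=
    Real.log_nonneg (by exact_mod_cast Nat.one_le_cast.mpr (by omega))
  rcases eq_or_lt_of_le ht with h0 | htpos
  · rw [← h0]
    simp only [omegaQ, if_pos rfl]
    positivity
  rw [omegaQ_one_eq]
  have hnpos : (0:ℝ) < n := by positivity
  have step1 : t * ell t ≤ t * Real.log 3 + t * max 0 (-Real.log t) := by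
    have := mul_le_mul_of_nonneg_left (ell_le (t := t)) ht
    linarith [this]
  have step2 : t * max 0 (-Real.log t) ≤ t * Real.log n + (1 + t) * ν := by
    rcases le_or_gt (-Real.log t) 0 with hneg | hpos
    · rw [max_eq_left hneg]
      have : 0 ≤ (1 + t) * ν := by positivity
      nlinarith
    · rw [max_eq_right hpos.le]
      have hu : (0:ℝ) < (n:ℝ) * t := by positivity
      have hlogid : -Real.log ((n:ℝ) * t) = -Real.log n - Real.log t := by
        rw [Real.log_mul hnpos.ne' htpos.ne']; ring
      have hsqpos : 0 < Real.sqrt (((n:ℝ)*t)⁻¹) := Real.sqrt_pos.mpr (by positivity)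
      have hsb : -Real.log ((n:ℝ) * t) ≤ 2 * Real.sqrt (((n:ℝ)*t)⁻¹) := by
        have h1 : Real.log (Real.sqrt (((n:ℝ)*t)⁻¹)) = Real.log (((n:ℝ)*t)⁻¹) / 2 :=
          Real.log_sqrt (by positivity)
        have h2 : Real.log (Real.sqrt (((n:ℝ)*t)⁻¹)) ≤ Real.sqrt (((n:ℝ)*t)⁻¹) - 1 :=
          Real.log_le_sub_one_of_pos hsqpos
        have h3 : Real.log (((n:ℝ)*t)⁻¹) = -Real.log ((n:ℝ)*t) := Real.log_inv _
        linarith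
      have hsqrt_eq : Real.sqrt (((n:ℝ)*t)⁻¹) = (Real.sqrt n * Real.sqrt t)⁻¹ := by
        rw [← Real.sqrt_mul hnpos.le, Real.sqrt_inv]
      have hst : 0 < Real.sqrt t := Real.sqrt_pos.mpr htpos
      have hsn : 0 < Real.sqrt n := Real.sqrt_pos.mpr hnpos
      have key : t * (-Real.log n - Real.log t) ≤ (1 + t) * ν := by
        have h4 : t * (-Real.log ((n:ℝ)*t)) ≤ t * (2 * Real.sqrt (((n:ℝ)*t)⁻¹)) :=
          mul_le_mul_of_nonneg_left hsb ht
        have h5 : t * (2 * Real.sqrt (((n:ℝ)*t)⁻¹)) = 2 * Real.sqrt t * (Real.sqrt n)⁻¹ := by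
          rw [hsqrt_eq]
          field_simp
          nlinarith [Real.mul_self_sqrt ht]
        have h6 : 2 * Real.sqrt t ≤ 1 + t := by
          nlinarith [Real.sq_sqrt ht, sq_nonneg (Real.sqrt t - 1)]
        have h7 : 2 * Real.sqrt t * (Real.sqrt n)⁻¹ ≤ (1 + t) * (Real.sqrt n)⁻¹ :=
          mul_le_mul_of_nonneg_right h6 (by positivity)
        rw [hν, nu_eq hn]
        calc t * (-Real.log n - Real.log t) = t * (-Real.log ((n:ℝ)*t)) := by rw [hlogid]
          _ ≤ 2 * Real.sqrt t * (Real.sqrt n)⁻¹ := by rw [← h5]; exact h4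
          _ ≤ (1 + t) * (Real.sqrt n)⁻¹ := h7
      nlinarith
  have hineq : t * ν ≤ t := by nlinarith
  nlinarith

lemma main_aux {Ω : Type} [MeasurableSpace Ω] (μ : Measure Ω) [IsProbabilityMeasure μ]
    {r a ν C L : ℝ} (hr : 1 ≤ r) (ha : 0 ≤ a) (hν : 0 < ν) (hC : 0 < C) (hL : 0 < L)
    (haL : a ≤ 5 * L) (h1L : 1 ≤ 2 * L)
    (S T : Ω → ℝ) (hSm : Measurable S) (hTm : Measurable T)
    (hS0 : ∀ ω, 0 ≤ S ω) (hT0 : ∀ ω, 0 ≤ T ω)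
    (hTS : ∀ ω, T ω ≤ a * S ω + ν)
    (hST : ∀ ω, S ω ≤ 1/3 + T ω / Real.log 3)
    (hbound : (∫ ω, S ω ^ r ∂μ) ^ (1/r) ≤ C * ν) :
    (∫ ω, T ω ^ r ∂μ) ^ (1/r) ≤ (10*C + 4) * ν * L := by
  have hr0 : (0:ℝ) < r := by linarith
  have hrinv : (0:ℝ) < 1/r := by positivity
  have hrinv1 : 1/r ≤ 1 := by
    rw [div_le_one hr0]; exact hr
  have hlog3pos : (0:ℝ) < Real.log 3 := Real.log_pos (by norm_num)
  by_cases hInt : Integrable (fun ω => S ω ^ r) μ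
  · -- integrable case
    have hptw : ∀ ω, T ω ^ r ≤ (2*a)^r * S ω ^ r + (2*ν)^r := by
      intro ω
      have h1 : T ω ^ r ≤ (a * S ω + ν) ^ r :=
        Real.rpow_le_rpow (hT0 ω) (hTS ω) hr0.le
      have h2 : (a * S ω + ν) ^ r ≤ 2^r * ((a * S ω)^r + ν^r) :=
        add_rpow_le' (mul_nonneg ha (hS0 ω)) hν.le hr0.le
      have h3 : (a * S ω) ^ r = a^r * S ω ^ r := Real.mul_rpow ha (hS0 ω)
      have h4 : (2*a)^r = 2^r * a^r := Real.mul_rpow (by norm_num) ha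
      have h5 : (2*ν)^r = 2^r * ν^r := Real.mul_rpow (by norm_num) hν.le
      rw [h4, h5, mul_assoc]
      rw [h3] at h2
      linarith [h1, h2]
    have hg : Integrable (fun ω => (2*a)^r * S ω ^ r + (2*ν)^r) μ :=
      (hInt.const_mul _).add (integrable_const _)
    have hIT : ∫ ω, T ω ^ r ∂μ ≤ ∫ ω, ((2*a)^r * S ω ^ r + (2*ν)^r) ∂μ := by
      apply integral_mono_of_nonneg
      · exact Filter.Eventually.of_forall (fun ω => Real.rpow_nonneg (hT0 ω) r)
      · exact hg
      · exact Filter.Eventually.of_forall hptw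
    have hIg : ∫ ω, ((2*a)^r * S ω ^ r + (2*ν)^r) ∂μ
        = (2*a)^r * ∫ ω, S ω ^ r ∂μ + (2*ν)^r := by
      rw [integral_add (hInt.const_mul _) (integrable_const _), integral_const_mul,
        integral_const]
      simp [measure_univ]
    have hIS0 : 0 ≤ ∫ ω, S ω ^ r ∂μ :=
      integral_nonneg fun ω => Real.rpow_nonneg (hS0 ω) r
    have hIT0 : 0 ≤ ∫ ω, T ω ^ r ∂μ :=
      integral_nonneg fun ω => Real.rpow_nonneg (hT0 ω) r
    have h2a : (0:ℝ) ≤ 2*a := by linarith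
    have h2ν : (0:ℝ) ≤ 2*ν := by linarith
    have hcalc : (∫ ω, T ω ^ r ∂μ) ^ (1/r)
        ≤ (2*a) * (∫ ω, S ω ^ r ∂μ) ^ (1/r) + 2*ν := by
      calc (∫ ω, T ω ^ r ∂μ) ^ (1/r)
          ≤ ((2*a)^r * ∫ ω, S ω ^ r ∂μ + (2*ν)^r) ^ (1/r) :=
            Real.rpow_le_rpow hIT0 (le_of_le_of_eq hIT hIg) hrinv.le
        _ ≤ ((2*a)^r * ∫ ω, S ω ^ r ∂μ) ^ (1/r) + ((2*ν)^r) ^ (1/r) :=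
            rpow_add_le' (mul_nonneg (Real.rpow_nonneg h2a r) hIS0)
              (Real.rpow_nonneg h2ν r) hrinv.le hrinv1
        _ = (2*a) * (∫ ω, S ω ^ r ∂μ) ^ (1/r) + 2*ν := by
            rw [Real.mul_rpow (Real.rpow_nonneg h2a r) hIS0,
              ← Real.rpow_mul h2a, ← Real.rpow_mul h2ν,
              mul_one_div_cancel hr0.ne', Real.rpow_one, Real.rpow_one]
    have hfin : (2*a) * (∫ ω, S ω ^ r ∂μ) ^ (1/r) + 2*ν ≤ (10*C + 4) * ν * L := by
      have h8 : (2*a) * (∫ ω, S ω ^ r ∂μ) ^ (1/r) ≤ (2*a) * (C * ν) :=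
        mul_le_mul_of_nonneg_left hbound h2a
      have h9 : (2*a) * (C * ν) ≤ 10 * L * (C * ν) := by
        nlinarith [mul_le_mul_of_nonneg_right haL (le_of_lt (mul_pos hC hν))]
      have h10 : 2 * ν ≤ 4 * ν * L := by nlinarith
      nlinarith
    linarith
  · -- non-integrable case : the T-integral also fails to be integrable, so it is 0
    have hTnot : ¬ Integrable (fun ω => T ω ^ r) μ := by
      intro h
      apply hInt
      have hg2 : Integrable (fun ω => 2^r * ((1/3:ℝ)^r + ((Real.log 3)⁻¹)^r * T ω ^ r)) μ := by
        apply Integrable.const_mul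
        exact (integrable_const _).add (h.const_mul _)
      apply Integrable.mono' hg2 ((hSm.pow_const r).aestronglyMeasurable)
      filter_upwards with ω
      rw [Real.norm_of_nonneg (Real.rpow_nonneg (hS0 ω) r)]
      have hd : T ω / Real.log 3 = (Real.log 3)⁻¹ * T ω := by ring
      calc S ω ^ r ≤ (1/3 + T ω / Real.log 3) ^ r :=
            Real.rpow_le_rpow (hS0 ω) (hST ω) hr0.le
        _ ≤ 2^r * ((1/3:ℝ)^r + (T ω / Real.log 3)^r) :=
            add_rpow_le' (by norm_num) (div_nonneg (hT0 ω) hlog3pos.le) hr0.le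
        _ = 2^r * ((1/3:ℝ)^r + ((Real.log 3)⁻¹)^r * T ω ^ r) := by
            rw [hd, Real.mul_rpow (by positivity) (hT0 ω)]
    rw [integral_undef hTnot, Real.zero_rpow (by positivity)]
    positivity

/-- Let `r ≥ 1` and `C > 0`. There exists `C' > 0` depending only on `C` such that
for every `n ≥ 2`, every probability space `(Ω, μ)` and all nonnegative random variables
`Z₁, …, Z_n` with `‖max_{1≤k≤n} Z_k‖_{L^r} ≤ C n^{-1/2}`, one has
`‖max_{1≤k≤n} ω₁(Z_k)‖_{L^r} ≤ C' n^{-1/2} log n`. -/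
theorem omegaQ_one_max_Lr_bound (r C : ℝ) (hr : 1 ≤ r) (hC : 0 < C) :
    ∃ C' : ℝ, 0 < C' ∧
      ∀ (n : ℕ), 2 ≤ n →
        ∀ (Ω : Type) (_ : MeasurableSpace Ω) (μ : Measure Ω), IsProbabilityMeasure μ →
          ∀ Z : ℕ → Ω → ℝ, (∀ k, Measurable (Z k)) → (∀ k ω, 0 ≤ Z k ω) →
            (∫ ω, (⨆ k ∈ Finset.Icc 1 n, Z k ω) ^ r ∂μ) ^ (1/r) ≤ C * (n:ℝ) ^ (-(1:ℝ)/2) →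
            (∫ ω, (⨆ k ∈ Finset.Icc 1 n, omegaQ 1 (Z k ω)) ^ r ∂μ) ^ (1/r)
              ≤ C' * (n:ℝ) ^ (-(1:ℝ)/2) * Real.log n := by
  refine ⟨10*C + 4, by positivity, ?_⟩
  intro n hn Ω mΩ μ hμ Z hZm hZ0 hbound
  have hνpos : 0 < (n:ℝ) ^ (-(1:ℝ)/2) := nu_pos hn
  have hlog2 : (0.6931471803:ℝ) < Real.log 2 := Real.log_two_gt_d9
  have hL2 : Real.log 2 ≤ Real.log n :=
    Real.log_le_log (by norm_num) (by exact_mod_cast hn)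
  have hLpos : 0 < Real.log n := by linarith
  have h1L : 1 ≤ 2 * Real.log n := by linarith
  have hlog3 : Real.log 3 ≤ 2 * Real.log n := by
    have h34 : Real.log 3 ≤ Real.log 4 := Real.log_le_log (by norm_num) (by norm_num)
    have h4 : Real.log 4 = 2 * Real.log 2 := by
      rw [show (4:ℝ) = 2^2 by norm_num, Real.log_pow]; push_cast; ring
    linarith
  have hlog3nn : (0:ℝ) ≤ Real.log 3 := Real.log_nonneg (by norm_num)
  have haL : Real.log 3 + Real.log n + 1 ≤ 5 * Real.log n := by linarith
  have h1s : (1:ℕ) ∈ Finset.Icc 1 n := Finset.mem_Icc.mpr ⟨le_refl 1, by omega⟩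
  have hS0 : ∀ ω, 0 ≤ ⨆ k ∈ Finset.Icc 1 n, Z k ω := fun ω =>
    le_trans (hZ0 1 ω) (le_biSup' (fun k => Z k ω) h1s)
  have hT0 : ∀ ω, 0 ≤ ⨆ k ∈ Finset.Icc 1 n, omegaQ 1 (Z k ω) := fun ω =>
    le_trans (omegaQ_one_nonneg (hZ0 1 ω)) (le_biSup' (fun k => omegaQ 1 (Z k ω)) h1s)
  exact main_aux μ hr (by positivity) hνpos hC hLpos haL h1L
    (fun ω => ⨆ k ∈ Finset.Icc 1 n, Z k ω)
    (fun ω => ⨆ k ∈ Finset.Icc 1 n, omegaQ 1 (Z k ω))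
    (Measurable.iSup fun k => Measurable.iSup_Prop _ (hZm k))
    (Measurable.iSup fun k => Measurable.iSup_Prop _ (omegaQ_one_measurable.comp (hZm k)))
    hS0 hT0
    (fun ω => biSup_le'
      (add_nonneg (mul_nonneg (by positivity) (hS0 ω)) hνpos.le)
      (fun k hk => le_trans (key_bound hn (hZ0 k ω))
        (by
          have := le_biSup' (fun j => Z j ω) hk
          have hcoef : (0:ℝ) ≤ Real.log 3 + Real.log n + 1 := by positivity
          nlinarith)))
    (fun ω => biSup_le'
      (by
        have := hT0 ω
        have : (0:ℝ) ≤ (⨆ k ∈ Finset.Icc 1 n, omegaQ 1 (Z k ω)) / Real.log 3 :=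
          div_nonneg (hT0 ω) (Real.log_nonneg (by norm_num))
        linarith)
      (fun k hk => le_trans (le_omega_aux (hZ0 k ω))
        (by
          have h := le_biSup' (fun j => omegaQ 1 (Z j ω)) hk
          have hlog3pos : (0:ℝ) < Real.log 3 := Real.log_pos (by norm_num)
          have h2 := (div_le_div_iff_of_pos_right hlog3pos).mpr h
          linarith)))
    hbound
end

section
/- Let (B_t)_{t≥0} be a standard Brownian motion, let ε > 0, and let c ∈ (0, 1/6] be such that ℓ(t)/ℓ(2t) ≤ 1 + ε for all t ∈ (0, c). For T > 0 define S_{T,c} = sup_{0 ≤ s < t ≤ T, t − s < c} |B_t − B_s| / ω_{1/2}(t − s). Then for every x > 0, P(S_{2,c} > (1+ε)^{1/2} x) ≤ P(S_{1,c} > x). -/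
open MeasureTheory ProbabilityTheory
open scoped ENNReal

/-- `B` is a standard Brownian motion on the probability space `(Ω, P)`. -/
def IsStdBM {Ω : Type*} [MeasurableSpace Ω] (P : Measure Ω) (B : ℝ → Ω → ℝ) : Prop :=
  (∀ t : ℝ, Measurable (B t)) ∧
  (∀ᵐ ω ∂P, ContinuousOn (fun t => B t ω) (Set.Ici (0:ℝ))) ∧
  (∀ᵐ ω ∂P, B 0 ω = 0) ∧
  (∀ s t : ℝ, 0 ≤ s → s ≤ t →
    Measure.map (fun ω => B t ω - B s ω) P = gaussianReal 0 (Real.toNNReal (t - s))) ∧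
  (∀ u : ℕ → ℝ, (∀ i, 0 ≤ u i) → Monotone u →
    iIndepFun (fun i ω => B (u (i+1)) ω - B (u i) ω) P)

/-- `S_{T,c}(ω) = sup_{0 ≤ s < t ≤ T, t - s < c} |B_t(ω) - B_s(ω)| / ω_{1/2}(t-s)`,
regarded as a `[0,∞]`-valued random variable. -/
noncomputable def Sbm {Ω : Type*} (B : ℝ → Ω → ℝ) (T c : ℝ) (ω : Ω) : ℝ≥0∞ :=
  ⨆ (s : ℝ) (t : ℝ) (_ : 0 ≤ s) (_ : s < t) (_ : t ≤ T) (_ : t - s < c),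
    ENNReal.ofReal (|B t ω - B s ω| / omegaQ (1/2) (t - s))

lemma ell_pos {t : ℝ} (h0 : 0 < t) (h1 : t < 1) : 0 < ell t := by
  unfold ell; split_ifs with h
  · simpa using Real.log_neg h0 h1
  · exact Real.log_pos (by norm_num)

lemma omegaQ_half_pos {t : ℝ} (h0 : 0 < t) (h1 : t < 1) : 0 < omegaQ (1/2) t := by
  unfold omegaQ; rw [if_neg h0.ne']
  exact Real.rpow_pos_of_pos (mul_pos h0 (ell_pos h0 h1)) _

lemma omegaQ_half_eq {t : ℝ} (h0 : t ≠ 0) : omegaQ (1/2) t = (t * ell t) ^ ((1:ℝ)/2) := if_neg h0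

lemma key_real_ineq {ε c u a : ℝ} (hε : 0 < ε) (hc : c ≤ 1/6)
    (hℓ : ∀ t ∈ Set.Ioo (0:ℝ) c, ell t / ell (2*t) ≤ 1 + ε)
    (hu : 0 < u) (h2u : 2*u < c) (ha : 0 ≤ a) :
    a / omegaQ (1/2) (2*u) ≤ (1+ε) ^ ((1:ℝ)/2) * (((2:ℝ) ^ ((1:ℝ)/2))⁻¹ * a / omegaQ (1/2) u) := by
  have huc : u < c := lt_of_le_of_lt (by linarith) h2u
  have h2u1 : 2*u < 1 := by linarith
  have hu1 : u < 1 := by linarith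
  have hell2u : 0 < ell (2*u) := ell_pos (by linarith) h2u1
  have hellu : 0 < ell u := ell_pos hu hu1
  have hℓu : ell u ≤ (1+ε) * ell (2*u) := by
    have := hℓ u ⟨hu, huc⟩
    rwa [div_le_iff₀ hell2u] at this
  have key : 2*(u * ell u) ≤ (1+ε) * ((2*u) * ell (2*u)) := by nlinarith
  have h1 : (0:ℝ) ≤ 2*(u*ell u) := by positivity
  rw [omegaQ_half_eq hu.ne', omegaQ_half_eq (by positivity : (2*u) ≠ 0)]
  set r : ℝ := (2:ℝ) ^ ((1:ℝ)/2) with hr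
  set q : ℝ := (1+ε) ^ ((1:ℝ)/2) with hq
  set w : ℝ := (u * ell u) ^ ((1:ℝ)/2) with hw
  set w2 : ℝ := ((2*u) * ell (2*u)) ^ ((1:ℝ)/2) with hw2
  have hrpos : 0 < r := Real.rpow_pos_of_pos (by norm_num) _
  have hqpos : 0 < q := Real.rpow_pos_of_pos (by linarith) _
  have hwpos : 0 < w := Real.rpow_pos_of_pos (by positivity) _
  have hw2pos : 0 < w2 := Real.rpow_pos_of_pos (by positivity) _
  have h2 : r * w ≤ q * w2 := by
    rw [hr, hq, hw, hw2, ← Real.mul_rpow (by norm_num) (by positivity),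
      ← Real.mul_rpow (by linarith) (by positivity)]
    exact Real.rpow_le_rpow h1 key (by norm_num)
  rw [← mul_div_assoc, div_le_div_iff₀ hw2pos hwpos]
  calc a * w = (r⁻¹ * a) * (r * w) := by field_simp
    _ ≤ (r⁻¹ * a) * (q * w2) :=
        mul_le_mul_of_nonneg_left h2 (mul_nonneg (inv_nonneg.mpr hrpos.le) ha)
    _ = q * (r⁻¹ * a) * w2 := by ring

noncomputable def scaledBM {Ω : Type*} (B : ℝ → Ω → ℝ) : ℝ → Ω → ℝ :=
  fun t ω => (((2:ℝ) ^ ((1:ℝ)/2))⁻¹) * B (2*t) ω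

lemma sq_k : ((((2:ℝ) ^ ((1:ℝ)/2))⁻¹))^2 = 2⁻¹ := by
  have h : (((2:ℝ) ^ ((1:ℝ)/2)))^(2:ℕ) = 2 := by
    rw [← Real.rpow_natCast ((2:ℝ)^((1:ℝ)/2)) 2, ← Real.rpow_mul (by norm_num)]
    norm_num
  rw [inv_pow, h]

lemma isStdBM_scaled {Ω : Type*} [MeasurableSpace Ω] {P : Measure Ω} [IsProbabilityMeasure P]
    {B : ℝ → Ω → ℝ} (hB : IsStdBM P B) : IsStdBM P (scaledBM B) := by
  obtain ⟨hmeas, hcont, h0, hgauss, hindep⟩ := hB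
  refine ⟨fun t => (hmeas _).const_mul _, ?_, ?_, ?_, ?_⟩
  · filter_upwards [hcont] with ω hω
    exact continuousOn_const.mul (hω.comp ((continuous_const.mul continuous_id).continuousOn)
      (fun t ht => Set.mem_Ici.mpr (mul_nonneg (by norm_num) (Set.mem_Ici.mp ht))))
  · filter_upwards [h0] with ω hω
    simp [scaledBM, show (2:ℝ)*0 = 0 by ring, hω]
  · intro s t hs hst
    have hfun : (fun ω => scaledBM B t ω - scaledBM B s ω)
        = (fun y => (((2:ℝ) ^ ((1:ℝ)/2))⁻¹) * y) ∘ (fun ω => B (2*t) ω - B (2*s) ω) := by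
      funext ω; simp only [scaledBM, Function.comp_apply]; ring
    rw [hfun, ← Measure.map_map (measurable_const_mul (((2:ℝ) ^ ((1:ℝ)/2))⁻¹))
        (show Measurable (fun ω => B (2*t) ω - B (2*s) ω) from (hmeas _).sub (hmeas _)),
      hgauss (2*s) (2*t) (by linarith) (by linarith),
      gaussianReal_map_const_mul ((((2:ℝ) ^ ((1:ℝ)/2))⁻¹))]
    congr 1
    · simp
    · ext
      simp only [NNReal.coe_mul, Real.coe_toNNReal', NNReal.coe_mk]
      rw [sq_k, show 2*t-2*s = 2*(t-s) by ring]
      rcases le_total (t - s) 0 with h | h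
      · rw [max_eq_right h, max_eq_right (by linarith)]; ring
      · rw [max_eq_left h, max_eq_left (by linarith)]; ring
  · intro u hu hmono
    have h := (hindep (fun i => 2 * u i)
      (fun i => mul_nonneg (by norm_num) (hu i))
      (fun i j hij => by have := hmono hij; dsimp; linarith)).comp
      (g := fun _ y => (((2:ℝ) ^ ((1:ℝ)/2))⁻¹) * y) (fun i => measurable_const_mul _)
    have hfe : (fun (i:ℕ) ω => scaledBM B (u (i+1)) ω - scaledBM B (u i) ω)
        = fun i => (fun y => (((2:ℝ) ^ ((1:ℝ)/2))⁻¹) * y)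
            ∘ fun ω => B (2 * u (i+1)) ω - B (2 * u i) ω := by
      funext i ω; simp only [scaledBM, Function.comp_apply]; ring
    rw [hfe]; exact h

/-- two prob measures on a subsingleton measurable space are equal -/
lemma measure_eq_of_subsingleton {α : Type*} [MeasurableSpace α] [Subsingleton α]
    (μ ν : Measure α) [IsProbabilityMeasure μ] [IsProbabilityMeasure ν] : μ = ν := by
  ext s _
  rcases s.eq_empty_or_nonempty with rfl | ⟨y, hy⟩
  · simp
  · have : s = Set.univ := Set.eq_univ_iff_forall.mpr fun x => by rwa [Subsingleton.elim x y]
    simp [this]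

lemma incr_tuple_law_eq {Ω : Type*} [MeasurableSpace Ω] {P : Measure Ω} [IsProbabilityMeasure P]
    {B B₂ : ℝ → Ω → ℝ} (hB : IsStdBM P B) (hB₂ : IsStdBM P B₂)
    (u : ℕ → ℝ) (hu : ∀ i, 0 ≤ u i) (hmono : Monotone u) (n : ℕ) :
    Measure.map (fun ω (i : Fin n) => B (u (i+1)) ω - B (u i) ω) P
      = Measure.map (fun ω (i : Fin n) => B₂ (u (i+1)) ω - B₂ (u i) ω) P := by
  have hmB : ∀ m, Measurable (fun ω (i : Fin m) => B (u (i+1)) ω - B (u i) ω) :=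
    fun m => measurable_pi_lambda _ fun i => (hB.1 _).sub (hB.1 _)
  have hmB₂ : ∀ m, Measurable (fun ω (i : Fin m) => B₂ (u (i+1)) ω - B₂ (u i) ω) :=
    fun m => measurable_pi_lambda _ fun i => (hB₂.1 _).sub (hB₂.1 _)
  induction n with
  | zero =>
    have h1 : IsProbabilityMeasure
        (Measure.map (fun ω (i : Fin 0) => B (u (i+1)) ω - B (u i) ω) P) :=
      Measure.isProbabilityMeasure_map (hmB 0).aemeasurable
    have h2 : IsProbabilityMeasure
        (Measure.map (fun ω (i : Fin 0) => B₂ (u (i+1)) ω - B₂ (u i) ω) P) :=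
      Measure.isProbabilityMeasure_map (hmB₂ 0).aemeasurable
    exact measure_eq_of_subsingleton _ _
  | succ n ih =>
    set f : ℕ → Ω → ℝ := fun i ω => B (u (i+1)) ω - B (u i) ω with hf
    set f₂ : ℕ → Ω → ℝ := fun i ω => B₂ (u (i+1)) ω - B₂ (u i) ω with hf₂
    have hfm : ∀ i, Measurable (f i) := fun i => (hB.1 _).sub (hB.1 _)
    have hfm₂ : ∀ i, Measurable (f₂ i) := fun i => (hB₂.1 _).sub (hB₂.1 _)
    -- snoc map
    set S : ((Fin n → ℝ) × ℝ) → (Fin (n+1) → ℝ) := fun p => Fin.snoc p.1 p.2 with hS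
    have hSm : Measurable S := by
      apply measurable_pi_lambda
      intro i
      refine Fin.lastCases ?_ ?_ i
      · simpa [hS, Fin.snoc_last] using measurable_snd
      · intro j
        simp only [hS, Fin.snoc_castSucc]
        exact (measurable_pi_apply j).comp measurable_fst
    -- tuple decomposition
    have hdec : ∀ (C : ℝ → Ω → ℝ),
        (fun ω (i : Fin (n+1)) => C (u (i+1)) ω - C (u i) ω)
        = S ∘ (fun ω => ((fun i : Fin n => C (u (i+1)) ω - C (u i) ω),
            C (u (n+1)) ω - C (u n) ω)) := by
      intro C
      funext ω
      refine funext fun i => ?_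
      refine Fin.lastCases ?_ ?_ i
      · simp [hS, Fin.snoc_last]
      · intro j
        simp [hS, Fin.snoc_castSucc]
    -- independence
    have hindep : ∀ (C : ℝ → Ω → ℝ) (hC : IsStdBM P C),
        IndepFun (fun ω (i : Fin n) => C (u (i+1)) ω - C (u i) ω)
          (fun ω => C (u (n+1)) ω - C (u n) ω) P := by
      intro C hC
      have hiI := hC.2.2.2.2 u hu hmono
      have hg : ∀ i : ℕ, Measurable (fun ω => C (u (i+1)) ω - C (u i) ω) :=
        fun i => (hC.1 _).sub (hC.1 _)
      have hbase := hiI.indepFun_finset (Finset.range n) {n}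
        (by simp [Finset.disjoint_left]; omega) hg
      have h1 : Measurable (fun (v : ↥(Finset.range n) → ℝ) (i : Fin n) =>
          v ⟨(i:ℕ), by simp [i.isLt]⟩) :=
        measurable_pi_lambda _ fun i => measurable_pi_apply _
      have h2 : Measurable (fun (v : ↥({n} : Finset ℕ) → ℝ) =>
          v ⟨n, by simp⟩) := measurable_pi_apply _
      exact hbase.comp h1 h2
    -- laws of pairs
    have hpair : ∀ (C : ℝ → Ω → ℝ) (hC : IsStdBM P C),
        Measure.map (fun ω => ((fun i : Fin n => C (u (i+1)) ω - C (u i) ω),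
            C (u (n+1)) ω - C (u n) ω)) P
        = (Measure.map (fun ω (i : Fin n) => C (u (i+1)) ω - C (u i) ω) P).prod
            (gaussianReal 0 (Real.toNNReal (u (n+1) - u n))) := by
      intro C hC
      rw [← hC.2.2.2.1 (u n) (u (n+1)) (hu n) (hmono (Nat.le_succ n))]
      exact (indepFun_iff_map_prod_eq_prod_map_map
        (measurable_pi_lambda _ fun i => (hC.1 _).sub (hC.1 _)).aemeasurable
        ((hC.1 _).sub (hC.1 _)).aemeasurable).mp (hindep C hC)
    calc Measure.map (fun ω (i : Fin (n+1)) => B (u (i+1)) ω - B (u i) ω) P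
        = Measure.map S (Measure.map (fun ω => ((fun i : Fin n => B (u (i+1)) ω - B (u i) ω),
            B (u (n+1)) ω - B (u n) ω)) P) := by
          rw [hdec B, ← Measure.map_map hSm]
          exact ((hmB n).prodMk ((hB.1 _).sub (hB.1 _)))
      _ = Measure.map S (Measure.map (fun ω => ((fun i : Fin n => B₂ (u (i+1)) ω - B₂ (u i) ω),
            B₂ (u (n+1)) ω - B₂ (u n) ω)) P) := by
          rw [hpair B hB, hpair B₂ hB₂, ih]
      _ = Measure.map (fun ω (i : Fin (n+1)) => B₂ (u (i+1)) ω - B₂ (u i) ω) P := by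
          rw [hdec B₂, ← Measure.map_map hSm]
          exact ((hmB₂ n).prodMk ((hB₂.1 _).sub (hB₂.1 _)))

lemma values_tuple_law_eq_mono {Ω : Type*} [MeasurableSpace Ω] {P : Measure Ω}
    [IsProbabilityMeasure P] {B B₂ : ℝ → Ω → ℝ} (hB : IsStdBM P B) (hB₂ : IsStdBM P B₂)
    {m : ℕ} (v : Fin m → ℝ) (hv : ∀ i, 0 ≤ v i) (hmono : Monotone v) :
    Measure.map (fun ω (i : Fin m) => B (v i) ω) P
      = Measure.map (fun ω (i : Fin m) => B₂ (v i) ω) P := by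
  rcases Nat.eq_zero_or_pos m with rfl | hm
  · have h1 : IsProbabilityMeasure (Measure.map (fun ω (i : Fin 0) => B (v i) ω) P) :=
      Measure.isProbabilityMeasure_map (measurable_pi_lambda _ fun i => hB.1 _).aemeasurable
    have h2 : IsProbabilityMeasure (Measure.map (fun ω (i : Fin 0) => B₂ (v i) ω) P) :=
      Measure.isProbabilityMeasure_map (measurable_pi_lambda _ fun i => hB₂.1 _).aemeasurable
    exact measure_eq_of_subsingleton _ _
  -- extend to u : ℕ → ℝ
  set u : ℕ → ℝ := fun k => if h : k = 0 then 0 else v ⟨min (k-1) (m-1), by omega⟩ with hu_def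
  have hu : ∀ i, 0 ≤ u i := by
    intro i
    by_cases h : i = 0 <;> simp [hu_def, h, hv]
  have humono : Monotone u := by
    intro a b hab
    rcases Nat.eq_zero_or_pos a with rfl | ha
    · simp only [hu_def]
      by_cases hb : b = 0 <;> simp [hb, hv]
    · have hbz : b ≠ 0 := by omega
      have haz : a ≠ 0 := by omega
      simp only [hu_def, dif_neg haz, dif_neg hbz]
      exact hmono (by simp [Fin.le_def]; omega)
  have huv : ∀ i : Fin m, u ((i:ℕ)+1) = v i := by
    intro i
    simp only [hu_def, dif_neg (Nat.succ_ne_zero _)]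
    congr 1
    exact Fin.ext (by show min ((i:ℕ)+1-1) (m-1) = (i:ℕ); have := i.isLt; omega)
  have hu0 : u 0 = 0 := by simp [hu_def]
  -- partial sum map
  set L : (Fin m → ℝ) → (Fin m → ℝ) :=
    fun w i => ∑ j : Fin m, if (j:ℕ) ≤ (i:ℕ) then w j else 0 with hL
  have hLm : Measurable L := by
    apply measurable_pi_lambda
    intro i
    apply Finset.measurable_sum
    intro j _
    split_ifs
    · exact measurable_pi_apply j
    · exact measurable_const
  -- telescoping
  have htel : ∀ (C : ℝ → Ω → ℝ) (ω : Ω) (i : Fin m),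
      L (fun j : Fin m => C (u ((j:ℕ)+1)) ω - C (u (j:ℕ)) ω) i
        = C (u ((i:ℕ)+1)) ω - C (u 0) ω := by
    intro C ω i
    have h1 : L (fun j : Fin m => C (u ((j:ℕ)+1)) ω - C (u (j:ℕ)) ω) i
        = ∑ j ∈ Finset.range m, (if j ≤ (i:ℕ) then C (u (j+1)) ω - C (u j) ω else 0) := by
      simp only [hL]
      rw [← Fin.sum_univ_eq_sum_range (fun j => if j ≤ (i:ℕ) then C (u (j+1)) ω - C (u j) ω else 0) m]
    rw [h1, ← Finset.sum_subset (Finset.range_subset_range.mpr (by omega : (i:ℕ)+1 ≤ m))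
      (fun x _ hx => by rw [if_neg]; simp at hx; omega)]
    rw [Finset.sum_congr rfl (fun x hx => if_pos (by simp at hx; omega))]
    exact Finset.sum_range_sub (fun k => C (u k) ω) ((i:ℕ)+1)
  -- a.e. equality of tuples
  have hae : ∀ (C : ℝ → Ω → ℝ), (∀ᵐ ω ∂P, C 0 ω = 0) →
      (fun ω (i : Fin m) => C (v i) ω)
        =ᵐ[P] (L ∘ (fun ω (j : Fin m) => C (u ((j:ℕ)+1)) ω - C (u (j:ℕ)) ω)) := by
    intro C hC0
    filter_upwards [hC0] with ω hω
    funext i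
    simp only [Function.comp_apply]
    rw [htel C ω i, hu0, hω, huv i, sub_zero]
  rw [Measure.map_congr (hae B hB.2.2.1), Measure.map_congr (hae B₂ hB₂.2.2.1),
    ← Measure.map_map hLm (measurable_pi_lambda
      (fun ω (j : Fin m) => B (u ((j:ℕ)+1)) ω - B (u (j:ℕ)) ω) fun j => (hB.1 _).sub (hB.1 _)),
    ← Measure.map_map hLm (measurable_pi_lambda
      (fun ω (j : Fin m) => B₂ (u ((j:ℕ)+1)) ω - B₂ (u (j:ℕ)) ω) fun j => (hB₂.1 _).sub (hB₂.1 _)),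
    incr_tuple_law_eq hB hB₂ u hu humono m]

lemma values_tuple_law_eq {Ω : Type*} [MeasurableSpace Ω] {P : Measure Ω}
    [IsProbabilityMeasure P] {B B₂ : ℝ → Ω → ℝ} (hB : IsStdBM P B) (hB₂ : IsStdBM P B₂)
    {ι : Type*} [Fintype ι] (t : ι → ℝ) (ht : ∀ i, 0 ≤ t i) :
    Measure.map (fun ω (i : ι) => B (t i) ω) P
      = Measure.map (fun ω (i : ι) => B₂ (t i) ω) P := by
  classical
  set s : Finset ℝ := Finset.image t Finset.univ with hs
  set m : ℕ := s.card with hm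
  set e := s.orderIsoOfFin rfl with he
  set v : Fin m → ℝ := fun i => (e i : ℝ) with hv
  have hvmono : Monotone v := fun i j hij => by
    simpa [hv] using (e.monotone hij)
  have hvnn : ∀ i, 0 ≤ v i := by
    intro i
    have : (e i : ℝ) ∈ s := (e i).2
    simp only [hs, Finset.mem_image] at this
    obtain ⟨j, _, hj⟩ := this
    simp [hv, ← hj, ht j]
  set σ : ι → Fin m := fun i => e.symm ⟨t i, by simp [hs]⟩ with hσ
  have hvσ : ∀ i, v (σ i) = t i := by
    intro i
    simp [hv, hσ]
  have hcomp : ∀ (C : ℝ → Ω → ℝ),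
      (fun ω (i : ι) => C (t i) ω)
        = (fun (w : Fin m → ℝ) (i : ι) => w (σ i)) ∘ (fun ω (j : Fin m) => C (v j) ω) := by
    intro C
    funext ω
    refine funext fun i => ?_
    simp [hvσ i]
  have hreindex : Measurable (fun (w : Fin m → ℝ) (i : ι) => w (σ i)) :=
    measurable_pi_lambda _ fun i => measurable_pi_apply _
  rw [hcomp B, hcomp B₂,
    ← Measure.map_map hreindex (measurable_pi_lambda _ fun j => hB.1 _),
    ← Measure.map_map hreindex (measurable_pi_lambda _ fun j => hB₂.1 _),
    values_tuple_law_eq_mono hB hB₂ v hvnn hvmono]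

noncomputable def ratTuple {Ω : Type*} (B : ℝ → Ω → ℝ) (ω : Ω) : ℚ → ℝ :=
  fun q => B (max (q:ℝ) 0) ω

lemma ratTuple_measurable {Ω : Type*} [MeasurableSpace Ω] {P : Measure Ω}
    {B : ℝ → Ω → ℝ} (hB : IsStdBM P B) : Measurable (ratTuple B) :=
  measurable_pi_lambda _ fun q => hB.1 _

lemma ratTuple_law_eq {Ω : Type*} [MeasurableSpace Ω] {P : Measure Ω}
    [IsProbabilityMeasure P] {B B₂ : ℝ → Ω → ℝ} (hB : IsStdBM P B) (hB₂ : IsStdBM P B₂) :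
    Measure.map (ratTuple B) P = Measure.map (ratTuple B₂) P := by
  have h1 : IsProbabilityMeasure (Measure.map (ratTuple B) P) :=
    Measure.isProbabilityMeasure_map (ratTuple_measurable hB).aemeasurable
  have h2 : IsProbabilityMeasure (Measure.map (ratTuple B₂) P) :=
    Measure.isProbabilityMeasure_map (ratTuple_measurable hB₂).aemeasurable
  refine ext_of_generate_finite (measurableCylinders (fun _ : ℚ => ℝ))
    (generateFrom_measurableCylinders).symm isPiSystem_measurableCylinders ?_ (by simp)
  rintro S hS
  obtain ⟨I, T, hT, rfl⟩ := (mem_measurableCylinders _).mp hS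
  rw [Measure.map_apply (ratTuple_measurable hB) (hT.cylinder),
    Measure.map_apply (ratTuple_measurable hB₂) (hT.cylinder)]
  have hpre : ∀ (C : ℝ → Ω → ℝ),
      (ratTuple C) ⁻¹' (cylinder I T)
        = (fun ω (i : I) => C (max ((i:ℚ):ℝ) 0) ω) ⁻¹' T := by
    intro C
    rfl
  rw [hpre B, hpre B₂,
    ← Measure.map_apply (measurable_pi_lambda _ fun i => hB.1 _) hT,
    ← Measure.map_apply (measurable_pi_lambda _ fun i => hB₂.1 _) hT,
    values_tuple_law_eq hB hB₂ (fun i : I => max ((i:ℚ):ℝ) 0) (fun i => le_max_right _ _)]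

/-- rational supremum functional on path space -/
noncomputable def GSup (T c : ℝ) (f : ℚ → ℝ) : ℝ≥0∞ :=
  ⨆ (p : ℚ) (q : ℚ) (_ : 0 ≤ p) (_ : p < q) (_ : (q:ℝ) ≤ T) (_ : (q:ℝ) - (p:ℝ) < c),
    ENNReal.ofReal (|f q - f p| / omegaQ (1/2) ((q:ℝ) - (p:ℝ)))

lemma GSup_measurable (T c : ℝ) : Measurable (GSup T c) := by
  apply Measurable.iSup; intro p
  apply Measurable.iSup; intro q
  apply Measurable.iSup; intro _
  apply Measurable.iSup; intro _
  apply Measurable.iSup; intro _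
  apply Measurable.iSup; intro _
  exact ENNReal.measurable_ofReal.comp
    (((measurable_pi_apply q).sub (measurable_pi_apply p)).abs.div_const _)

lemma omegaQ_half_eq' {t : ℝ} (h0 : t ≠ 0) (h3 : t ≤ 1/3) :
    omegaQ (1/2) t = (t * (-Real.log t)) ^ ((1:ℝ)/2) := by
  unfold omegaQ ell
  rw [if_neg h0, if_pos h3]

lemma Sbm_eq_GSup {Ω : Type*} {B : ℝ → Ω → ℝ} {T c : ℝ} (hc0 : 0 < c) (hc : c ≤ 1/6)
    {ω : Ω} (hω : ContinuousOn (fun t => B t ω) (Set.Ici (0:ℝ))) :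
    Sbm B T c ω = GSup T c (ratTuple B ω) := by
  apply le_antisymm
  · refine iSup_le fun s => iSup_le fun t => iSup_le fun hs => iSup_le fun hst =>
      iSup_le fun htT => iSup_le fun hts => ?_
    set d := t - s with hd
    have hd0 : 0 < d := sub_pos.mpr hst
    have hd3 : d < 1/3 := by rw [hd]; linarith
    -- rational approximating sequences
    have hex : ∀ n : ℕ, ∃ pq : ℚ × ℚ, s < (pq.1:ℝ) ∧ (pq.1:ℝ) < s + d/4/(n+1) ∧
        t - d/4/(n+1) < (pq.2:ℝ) ∧ ((pq.2:ℝ)) < t := by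
      intro n
      have hεpos : (0:ℝ) < d/4/(n+1) := by positivity
      obtain ⟨p, hp1, hp2⟩ := exists_rat_btwn (show s < s + d/4/(n+1) by linarith)
      obtain ⟨q, hq1, hq2⟩ := exists_rat_btwn (show t - d/4/(n+1) < t by linarith)
      exact ⟨(p, q), hp1, hp2, hq1, hq2⟩
    choose pq hpq1 hpq2 hpq3 hpq4 using hex
    set p : ℕ → ℚ := fun n => (pq n).1 with hp
    set q : ℕ → ℚ := fun n => (pq n).2 with hq
    have hen : ∀ n : ℕ, d/4/(n+1) ≤ d/4 := by
      intro n
      apply div_le_self (by positivity)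
      have : (1:ℝ) ≤ (n:ℝ)+1 := by exact_mod_cast Nat.one_le_iff_ne_zero.mpr (Nat.succ_ne_zero n)
      linarith
    have hqp : ∀ n, (p n : ℝ) < (q n : ℝ) := by
      intro n
      have h1 := hpq2 n; have h2 := hpq3 n; have h3 := hen n
      linarith
    have hp0 : ∀ n, (0:ℝ) ≤ (p n : ℝ) := fun n => le_of_lt (lt_of_le_of_lt hs (hpq1 n))
    have hq0 : ∀ n, (0:ℝ) ≤ (q n : ℝ) := fun n => le_of_lt (lt_of_le_of_lt (hp0 n) (hqp n))
    have hun : ∀ n, (q n : ℝ) - (p n : ℝ) < c := by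
      intro n
      have h1 := hpq1 n; have h2 := hpq4 n
      have : (q n : ℝ) - (p n : ℝ) < t - s := by linarith
      linarith
    have hud : ∀ n, d/2 ≤ (q n : ℝ) - (p n : ℝ) := by
      intro n
      have h1 := hpq2 n; have h2 := hpq3 n; have h3 := hen n
      linarith
    have hud' : ∀ n, (q n : ℝ) - (p n : ℝ) < d := by
      intro n
      have h1 := hpq1 n; have h2 := hpq4 n
      linarith
    -- limits
    have hε : Filter.Tendsto (fun n : ℕ => d/4/(n+1)) Filter.atTop (nhds 0) := by
      have h1 : (fun n : ℕ => d/4/(n+1)) = fun n : ℕ => (d/4) * (1/(n+1)) := by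
        funext n; ring
      rw [h1]
      simpa using tendsto_one_div_add_atTop_nhds_zero_nat.const_mul (d/4)
    have hps : Filter.Tendsto (fun n => (p n : ℝ)) Filter.atTop (nhds s) := by
      refine tendsto_of_tendsto_of_tendsto_of_le_of_le (f := fun n : ℕ => (p n : ℝ))
        (g := fun _ : ℕ => s) (h := fun n : ℕ => s + d/4/(n+1)) tendsto_const_nhds ?_
        (by intro n; exact (hpq1 n).le) (by intro n; exact (hpq2 n).le)
      simpa using tendsto_const_nhds.add hε
    have hqs : Filter.Tendsto (fun n => (q n : ℝ)) Filter.atTop (nhds t) := by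
      refine tendsto_of_tendsto_of_tendsto_of_le_of_le (f := fun n : ℕ => (q n : ℝ))
        (g := fun n : ℕ => t - d/4/(n+1)) (h := fun _ : ℕ => t) ?_ tendsto_const_nhds
        (by intro n; exact (hpq3 n).le) (by intro n; exact (hpq4 n).le)
      simpa using tendsto_const_nhds.sub hε
    have hBp : Filter.Tendsto (fun n => B ((p n : ℝ)) ω) Filter.atTop (nhds (B s ω)) := by
      refine ((hω s hs).tendsto).comp ?_
      exact tendsto_nhdsWithin_of_tendsto_nhds_of_eventually_within _ hps
        (Filter.Eventually.of_forall fun n => Set.mem_Ici.mpr (hp0 n))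
    have hBq : Filter.Tendsto (fun n => B ((q n : ℝ)) ω) Filter.atTop (nhds (B t ω)) := by
      refine ((hω t (le_trans hs hst.le)).tendsto).comp ?_
      exact tendsto_nhdsWithin_of_tendsto_nhds_of_eventually_within _ hqs
        (Filter.Eventually.of_forall fun n => Set.mem_Ici.mpr (hq0 n))
    have hnum : Filter.Tendsto (fun n => |B ((q n : ℝ)) ω - B ((p n : ℝ)) ω|)
        Filter.atTop (nhds (|B t ω - B s ω|)) := (hBq.sub hBp).abs
    have huu : Filter.Tendsto (fun n => (q n : ℝ) - (p n : ℝ)) Filter.atTop (nhds d) := by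
      simpa [hd] using hqs.sub hps
    have hcontA : ContinuousAt (fun u : ℝ => (u * (-Real.log u)) ^ ((1:ℝ)/2)) d := by
      refine ContinuousAt.rpow_const ?_ (Or.inr (by norm_num))
      exact continuousAt_id.mul (Real.continuousAt_log hd0.ne').neg
    have hden : Filter.Tendsto (fun n => omegaQ (1/2) ((q n : ℝ) - (p n : ℝ)))
        Filter.atTop (nhds (omegaQ (1/2) d)) := by
      have h1 : Filter.Tendsto (fun n => (((q n : ℝ) - (p n : ℝ)) *
          (-Real.log ((q n : ℝ) - (p n : ℝ)))) ^ ((1:ℝ)/2))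
          Filter.atTop (nhds ((d * (-Real.log d)) ^ ((1:ℝ)/2))) := hcontA.tendsto.comp huu
      rw [omegaQ_half_eq' hd0.ne' (by linarith)]
      refine Filter.Tendsto.congr (fun n => ?_) h1
      rw [omegaQ_half_eq' (show ((q n : ℝ) - (p n : ℝ)) ≠ 0 from (by have h1 := hud n; have h2 := hd0; linarith : (0:ℝ) < (q n:ℝ) - (p n:ℝ)).ne') (by have := hud' n; linarith)]
    have hratio : Filter.Tendsto
        (fun n => ENNReal.ofReal (|B ((q n : ℝ)) ω - B ((p n : ℝ)) ω| /
          omegaQ (1/2) ((q n : ℝ) - (p n : ℝ)))) Filter.atTop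
        (nhds (ENNReal.ofReal (|B t ω - B s ω| / omegaQ (1/2) d))) := by
      refine (ENNReal.continuous_ofReal.tendsto _).comp ?_
      exact hnum.div hden (omegaQ_half_pos hd0 (by linarith)).ne'
    refine le_of_tendsto' hratio fun n => ?_
    have hvq : ratTuple B ω (q n) = B ((q n : ℝ)) ω := by
      simp [ratTuple, max_eq_left (hq0 n)]
    have hvp : ratTuple B ω (p n) = B ((p n : ℝ)) ω := by
      simp [ratTuple, max_eq_left (hp0 n)]
    have hle : ENNReal.ofReal (|B ((q n : ℝ)) ω - B ((p n : ℝ)) ω| /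
        omegaQ (1/2) ((q n : ℝ) - (p n : ℝ)))
        ≤ GSup T c (ratTuple B ω) := by
      rw [← hvq, ← hvp]
      exact le_iSup_of_le (p n) (le_iSup_of_le (q n)
        (le_iSup_of_le (by exact_mod_cast hp0 n) (le_iSup_of_le (by exact_mod_cast hqp n)
        (le_iSup_of_le (le_trans (hpq4 n).le htT) (le_iSup_of_le (hun n) le_rfl)))))
    exact hle
  · refine iSup_le fun p => iSup_le fun q => iSup_le fun hp => iSup_le fun hpq =>
      iSup_le fun hqT => iSup_le fun hqp => ?_
    have hp' : (0:ℝ) ≤ (p:ℝ) := by exact_mod_cast hp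
    have hpq' : (p:ℝ) < (q:ℝ) := by exact_mod_cast hpq
    have hq' : (0:ℝ) ≤ (q:ℝ) := le_trans hp' hpq'.le
    have hval : ratTuple B ω q = B (q:ℝ) ω ∧ ratTuple B ω p = B (p:ℝ) ω := by
      constructor <;> simp [ratTuple, max_eq_left, hq', hp']
    rw [hval.1, hval.2]
    exact le_iSup_of_le (p:ℝ) (le_iSup_of_le (q:ℝ) (le_iSup_of_le hp' (le_iSup_of_le hpq'
      (le_iSup_of_le hqT (le_iSup_of_le hqp le_rfl)))))

lemma Sbm_scaled_pointwise {Ω : Type*} {B : ℝ → Ω → ℝ} {ε c : ℝ} (hε : 0 < ε)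
    (hc0 : 0 < c) (hc : c ≤ 1/6)
    (hℓ : ∀ t ∈ Set.Ioo (0:ℝ) c, ell t / ell (2*t) ≤ 1 + ε) (ω : Ω) :
    Sbm B 2 c ω ≤ ENNReal.ofReal ((1+ε) ^ ((1:ℝ)/2)) * Sbm (scaledBM B) 1 c ω := by
  refine iSup_le fun s => iSup_le fun t => iSup_le fun hs => iSup_le fun hst =>
    iSup_le fun ht2 => iSup_le fun htc => ?_
  set u := (t - s)/2 with hu_def
  have hu0 : 0 < u := by rw [hu_def]; linarith
  have h2u : 2*u < c := by rw [hu_def]; linarith [htc]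
  have hdiff : scaledBM B (t/2) ω - scaledBM B (s/2) ω
      = (((2:ℝ) ^ ((1:ℝ)/2))⁻¹) * (B t ω - B s ω) := by
    simp only [scaledBM]
    rw [show 2*(t/2) = t by ring, show 2*(s/2) = s by ring]
    ring
  have hknn : (0:ℝ) ≤ (((2:ℝ) ^ ((1:ℝ)/2))⁻¹) :=
    inv_nonneg.mpr (Real.rpow_nonneg (by norm_num) _)
  have habs : |scaledBM B (t/2) ω - scaledBM B (s/2) ω|
      = (((2:ℝ) ^ ((1:ℝ)/2))⁻¹) * |B t ω - B s ω| := by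
    rw [hdiff, abs_mul, abs_of_nonneg hknn]
  have hkey := key_real_ineq hε hc hℓ hu0 h2u (abs_nonneg (B t ω - B s ω))
  have hts : t - s = 2*u := by rw [hu_def]; ring
  have hts2 : t/2 - s/2 = u := by rw [hu_def]; ring
  calc ENNReal.ofReal (|B t ω - B s ω| / omegaQ (1/2) (t - s))
      ≤ ENNReal.ofReal ((1+ε) ^ ((1:ℝ)/2) *
          (((2:ℝ) ^ ((1:ℝ)/2))⁻¹ * |B t ω - B s ω| / omegaQ (1/2) u)) := by
        apply ENNReal.ofReal_le_ofReal
        rw [hts]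
        exact hkey
    _ = ENNReal.ofReal ((1+ε) ^ ((1:ℝ)/2)) * ENNReal.ofReal
          (|scaledBM B (t/2) ω - scaledBM B (s/2) ω| / omegaQ (1/2) (t/2 - s/2)) := by
        rw [ENNReal.ofReal_mul (Real.rpow_nonneg (by linarith) _), habs, hts2]
    _ ≤ ENNReal.ofReal ((1+ε) ^ ((1:ℝ)/2)) * Sbm (scaledBM B) 1 c ω := by
        apply mul_le_mul_right
        exact le_iSup_of_le (s/2) (le_iSup_of_le (t/2) (le_iSup_of_le (by linarith)
          (le_iSup_of_le (by linarith) (le_iSup_of_le (by linarith)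
          (le_iSup_of_le (by rw [hts2]; linarith) le_rfl)))))

/-- for a standard Brownian motion `B`, `ε > 0` and `c ∈ (0,1/6]` with
`ℓ(t)/ℓ(2t) ≤ 1 + ε` on `(0,c)`, one has
`P(S_{2,c} > (1+ε)^{1/2} x) ≤ P(S_{1,c} > x)` for all `x > 0`. -/
theorem Sbm_scaling_tail_bound {Ω : Type*} [MeasurableSpace Ω] (P : Measure Ω)
    [IsProbabilityMeasure P] (B : ℝ → Ω → ℝ) (hB : IsStdBM P B)
    (ε : ℝ) (hε : 0 < ε) (c : ℝ) (hc : c ∈ Set.Ioc (0:ℝ) (1/6))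
    (hℓ : ∀ t ∈ Set.Ioo (0:ℝ) c, ell t / ell (2*t) ≤ 1 + ε)
    (x : ℝ) (hx : 0 < x) :
    P {ω | Sbm B 2 c ω > ENNReal.ofReal ((1+ε) ^ ((1:ℝ)/2) * x)}
      ≤ P {ω | Sbm B 1 c ω > ENNReal.ofReal x} := by
  obtain ⟨hc0, hc6⟩ := hc
  have hB' : IsStdBM P (scaledBM B) := isStdBM_scaled hB
  have hC : ENNReal.ofReal ((1+ε) ^ ((1:ℝ)/2) * x)
      = ENNReal.ofReal ((1+ε) ^ ((1:ℝ)/2)) * ENNReal.ofReal x :=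
    ENNReal.ofReal_mul (Real.rpow_nonneg (by linarith) _)
  have hsub : {ω | Sbm B 2 c ω > ENNReal.ofReal ((1+ε) ^ ((1:ℝ)/2) * x)}
      ⊆ {ω | Sbm (scaledBM B) 1 c ω > ENNReal.ofReal x} := by
    intro ω hω
    simp only [Set.mem_setOf_eq] at *
    by_contra h
    push_neg at h
    have h1 := Sbm_scaled_pointwise (B := B) hε hc0 hc6 hℓ ω
    have h2 : Sbm B 2 c ω ≤ ENNReal.ofReal ((1+ε) ^ ((1:ℝ)/2)) * ENNReal.ofReal x :=
      le_trans h1 (mul_le_mul_right h _)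
    rw [← hC] at h2
    exact absurd hω (not_lt.mpr h2)
  have hGm : MeasurableSet {f : ℚ → ℝ | GSup 1 c f > ENNReal.ofReal x} :=
    (GSup_measurable 1 c) measurableSet_Ioi
  have hid : ∀ (C : ℝ → Ω → ℝ), IsStdBM P C →
      P {ω | Sbm C 1 c ω > ENNReal.ofReal x}
        = P ((ratTuple C) ⁻¹' {f | GSup 1 c f > ENNReal.ofReal x}) := by
    intro C hCb
    apply measure_congr
    rw [Filter.eventuallyEq_set]
    filter_upwards [hCb.2.1] with ω hω
    simp only [Set.mem_setOf_eq, Set.mem_preimage]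
    rw [Sbm_eq_GSup hc0 hc6 hω]
  calc P {ω | Sbm B 2 c ω > ENNReal.ofReal ((1+ε) ^ ((1:ℝ)/2) * x)}
      ≤ P {ω | Sbm (scaledBM B) 1 c ω > ENNReal.ofReal x} := measure_mono hsub
    _ = P ((ratTuple (scaledBM B)) ⁻¹' {f | GSup 1 c f > ENNReal.ofReal x}) :=
        hid (scaledBM B) hB'
    _ = Measure.map (ratTuple (scaledBM B)) P {f | GSup 1 c f > ENNReal.ofReal x} :=
        (Measure.map_apply (ratTuple_measurable hB') hGm).symm
    _ = Measure.map (ratTuple B) P {f | GSup 1 c f > ENNReal.ofReal x} := by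
        rw [ratTuple_law_eq hB hB']
    _ = P ((ratTuple B) ⁻¹' {f | GSup 1 c f > ENNReal.ofReal x}) :=
        Measure.map_apply (ratTuple_measurable hB) hGm
    _ = P {ω | Sbm B 1 c ω > ENNReal.ofReal x} := (hid B hB).symm
end
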